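/- In the k-deficient roundabout exploration model with k ≥ 1, let t = ⌊N/(2k)⌋. Then at most 6k agents remain active after t steps: |A(t)| ≤ 6k. -/

import Mathlib

/-- The circular interval `⟨i, j⟩` on `Fin N`: all states encountered when moving
forward from `i` to `j` along the cycle `(0, 1, …, N-1, 0)`. -/
def cInt {N : ℕ} (i j : Fin N) : Set (Fin N) := {x | (x - i).val ≤ (j - i).val}

/-- The half-open circular interval `⟨i, j)` on `Fin N`, which excludes the right
endpoint `j`. -/
def cIntHalf {N : ℕ} (i j : Fin N) : Set (Fin N) := cInt i j \ {j}

/-- The roundabout exploration model on the state set `Fin N`: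
`avail t` is the set of positions available at step `t` (steps `t = 1, …, N` are
relevant), `state i t` is the state of agent `a_i` after step `t`, and `active t`
is the set of (indices of) active agents after step `t`. Agent `a_i` starts at
state `i`, moves forward one position (cyclically) at step `t` whenever its
current position is available, and stays put otherwise. Active agents satisfy:
initially all agents are active, the active sets are decreasing, elimination
preserves coverage of visited states, and every active agent is non-redundant. -/
structure Roundabout (N : ℕ) [NeZero N] where
  avail : ℕ → Set (Fin N)
  state : Fin N → ℕ → Fin N
  active : ℕ → Set (Fin N)
  state_zero : ∀ i, state i 0 = i
  state_succ_of_mem : ∀ i t, state i t ∈ avail (t + 1) → state i (t + 1) = state i t + 1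
  state_succ_of_not_mem : ∀ i t, state i t ∉ avail (t + 1) → state i (t + 1) = state i t
  active_zero : active 0 = Set.univ
  active_mono : ∀ t, active (t + 1) ⊆ active t
  active_cover : ∀ t, (⋃ j ∈ active (t + 1), cInt j (state j (t + 1)))
      = ⋃ j ∈ active t, cInt j (state j (t + 1))
  active_nonredundant : ∀ t, ∀ i ∈ active (t + 1),
      ¬ cInt i (state i (t + 1)) ⊆ ⋃ j ∈ active (t + 1) \ {i}, cInt j (state j (t + 1))

/-- `D_i(t)`, the set of states visited by agent `a_i` up to step `t`. -/
def Roundabout.visited {N : ℕ} [NeZero N] (R : Roundabout N) (i : Fin N) (t : ℕ) :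
    Set (Fin N) := cInt i (R.state i t)

/-- The roundabout model is `k`-deficient: at every step `t ∈ [N]`, at most `2k`
positions are unavailable. -/
def Roundabout.KDeficient {N : ℕ} [NeZero N] (R : Roundabout N) (k : ℕ) : Prop :=
  ∀ t : ℕ, 1 ≤ t → t ≤ N → ((R.avail t)ᶜ : Set (Fin N)).ncard ≤ 2 * k

section
variable {N : ℕ} [NeZero N]
set_option linter.unusedSectionVars false
section
variable {N : ℕ} [NeZero N]

set_option linter.unusedSectionVars false
open Fin.NatCast Fin.CommRing

lemma fin_sub_val (a b : Fin N) :
    (a - b).val = if b.val ≤ a.val then a.val - b.val else N + a.val - b.val := by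
  have hN : 0 < N := N.pos_of_neZero
  have ha := a.isLt; have hb := b.isLt
  rw [Fin.sub_def]
  simp only
  split_ifs with h
  · have : N - b.val + a.val = N + (a.val - b.val) := by omega
    rw [this, Nat.add_mod_left, Nat.mod_eq_of_lt (by omega)]
  · rw [Nat.mod_eq_of_lt (by omega)]; omega

lemma mem_cInt {i j x : Fin N} : x ∈ cInt i j ↔ (x - i).val ≤ (j - i).val := Iff.rfl

lemma cInt_self_left (i j : Fin N) : i ∈ cInt i j := by simp [cInt]

lemma cInt_self_right (i j : Fin N) : j ∈ cInt i j := by simp [cInt]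

lemma cInt_trans {x y p : Fin N} (h : y ∈ cInt x p) : cInt y p ⊆ cInt x p := by
  intro z hz
  simp only [mem_cInt, fin_sub_val] at *
  have := x.isLt; have := y.isLt; have := p.isLt; have := z.isLt
  split_ifs at * <;> omega

lemma cInt_split {x s p : Fin N} (hp : p ∈ cInt x s) : cInt x s ⊆ cInt x p ∪ cInt p s := by
  intro z hz
  simp only [Set.mem_union, mem_cInt, fin_sub_val] at *
  have := x.isLt; have := s.isLt; have := p.isLt; have := z.isLt
  split_ifs at * <;> omega

lemma cInt_mono_left {x y p : Fin N} (h : (p - y).val ≤ (p - x).val) : cInt y p ⊆ cInt x p := by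
  intro z hz
  simp only [mem_cInt, fin_sub_val] at *
  have := x.isLt; have := y.isLt; have := p.isLt; have := z.isLt
  split_ifs at * <;> omega

lemma cInt_mono_right {p a b : Fin N} (h : (a - p).val ≤ (b - p).val) : cInt p a ⊆ cInt p b := by
  intro z hz
  simp only [mem_cInt] at *
  omega

lemma cInt_subset_of_mem {x s p : Fin N} (hp : p ∈ cInt x s) : cInt x p ⊆ cInt x s := by
  intro z hz
  simp only [mem_cInt] at *
  omega

lemma cInt_total {i j s : Fin N} (h : i ≠ j) : j ∈ cInt i s ∨ i ∈ cInt j s := by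
  have hij : i.val ≠ j.val := fun hv => h (Fin.val_injective hv)
  simp only [mem_cInt, fin_sub_val]
  have := i.isLt; have := j.isLt; have := s.isLt
  split_ifs <;> omega

lemma cInt_ncard (i s : Fin N) : (cInt i s).ncard = (s - i).val + 1 := by
  classical
  have hco : cInt i s = ↑(Finset.univ.filter (fun x : Fin N => (x - i).val ≤ (s - i).val)) := by
    ext x; simp [cInt]
  rw [hco, Set.ncard_coe_finset]
  have him : Finset.univ.filter (fun x : Fin N => (x - i).val ≤ (s - i).val)
      = (Finset.range ((s - i).val + 1)).image (fun r : ℕ => i + (r : Fin N)) := by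
    ext x
    simp only [Finset.mem_filter, Finset.mem_univ, true_and, Finset.mem_image, Finset.mem_range,
      Nat.lt_succ_iff]
    constructor
    · intro hx
      exact ⟨(x - i).val, hx, by rw [Fin.cast_val_eq_self]; simp⟩
    · rintro ⟨r, hr, rfl⟩
      have hrN : r < N := lt_of_le_of_lt hr (s - i).isLt
      have h2 : (i + (r : Fin N) - i) = (r : Fin N) := by ring
      rw [h2, Fin.val_natCast, Nat.mod_eq_of_lt hrN]
      exact hr
  rw [him, Finset.card_image_of_injOn, Finset.card_range]
  intro r₁ h₁ r₂ h₂ he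
  simp only [Finset.coe_range, Set.mem_Iio, Nat.lt_succ_iff] at h₁ h₂
  have h₁N : r₁ < N := lt_of_le_of_lt h₁ (s - i).isLt
  have h₂N : r₂ < N := lt_of_le_of_lt h₂ (s - i).isLt
  have h3 : (r₁ : Fin N) = (r₂ : Fin N) := by exact add_left_cancel he
  have h4 := congrArg Fin.val h3
  rwa [Fin.val_natCast, Fin.val_natCast, Nat.mod_eq_of_lt h₁N, Nat.mod_eq_of_lt h₂N] at h4


open Classical in
/-- number of steps among `1..t` at which agent `i` was blocked -/
noncomputable def blk (R : Roundabout N) (i : Fin N) (t : ℕ) : ℕ :=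
  ((Finset.range t).filter (fun τ => R.state i τ ∉ R.avail (τ + 1))).card

lemma blk_le (R : Roundabout N) (i : Fin N) (t : ℕ) : blk R i t ≤ t := by
  classical
  calc blk R i t ≤ (Finset.range t).card := Finset.card_filter_le _ _
  _ = t := Finset.card_range t

open Classical in
lemma blk_succ (R : Roundabout N) (i : Fin N) (t : ℕ) :
    blk R i (t + 1) = blk R i t + (if R.state i t ∉ R.avail (t + 1) then 1 else 0) := by
  classical
  unfold blk
  rw [Finset.range_add_one, Finset.filter_insert]
  by_cases h : R.state i t ∉ R.avail (t + 1)
  · simp only [if_pos h]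
    have ht : t ∉ (Finset.range t).filter (fun τ => R.state i τ ∉ R.avail (τ + 1)) := by
      intro hmem
      exact absurd (Finset.mem_range.mp (Finset.mem_filter.mp hmem).1) (lt_irrefl t)
    exact Finset.card_insert_of_notMem ht
  · simp only [if_neg h, add_zero]

lemma state_eq (R : Roundabout N) (i : Fin N) (t : ℕ) :
    R.state i t = i + ((t - blk R i t : ℕ) : Fin N) := by
  induction t with
  | zero => simp [R.state_zero, blk]
  | succ t ih =>
    have hb := blk_le R i t
    by_cases h : R.state i t ∈ R.avail (t + 1)
    · rw [blk_succ, if_neg (not_not_intro h), add_zero, R.state_succ_of_mem i t h, ih]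
      rw [show t + 1 - blk R i t = (t - blk R i t) + 1 from by omega]
      push_cast
      ring
    · rw [blk_succ, if_pos h, R.state_succ_of_not_mem i t h, ih,
        show t + 1 - (blk R i t + 1) = t - blk R i t from by omega]

lemma state_sub_val (R : Roundabout N) (i : Fin N) (t : ℕ) (ht : t < N) :
    (R.state i t - i).val = t - blk R i t := by
  rw [state_eq R i t, add_sub_cancel_left, Fin.val_natCast,
    Nat.mod_eq_of_lt (by omega)]

lemma active_le (R : Roundabout N) {u t : ℕ} (h : u ≤ t) : R.active t ⊆ R.active u := by
  induction t with
  | zero => simp_all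
  | succ t ih =>
    rcases Nat.eq_or_lt_of_le h with rfl | h'
    · exact subset_rfl
    · exact (R.active_mono t).trans (ih (by omega))

lemma subset_active_biUnion (R : Roundabout N) (t : ℕ) {w z : Fin N}
    (hw : w ∈ R.active t) (hne : w ≠ z) :
    cInt w (R.state w t) ⊆ ⋃ x ∈ R.active t \ {z}, cInt x (R.state x t) :=
  Set.subset_biUnion_of_mem (u := fun x => cInt x (R.state x t))
    (show w ∈ R.active t \ {z} from ⟨hw, by simpa using hne⟩)

lemma distinct_states (R : Roundabout N) (t : ℕ) {i j : Fin N}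
    (hi : i ∈ R.active (t + 1)) (hj : j ∈ R.active (t + 1)) (hne : i ≠ j) :
    R.state i (t + 1) ≠ R.state j (t + 1) := by
  intro heq
  rcases cInt_total (s := R.state j (t + 1)) hne with hc | hc
  · refine R.active_nonredundant t j hj ?_
    have h1 : cInt j (R.state j (t + 1)) ⊆ cInt i (R.state i (t + 1)) := by
      rw [heq]; exact cInt_trans hc
    exact h1.trans (subset_active_biUnion R (t + 1) hi hne)
  · refine R.active_nonredundant t i hi ?_
    have h1 : cInt i (R.state i (t + 1)) ⊆ cInt j (R.state j (t + 1)) := by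
      rw [heq]; exact cInt_trans hc
    exact h1.trans (subset_active_biUnion R (t + 1) hj hne.symm)

end

/-- **Corollary (few active agents).** In the `k`-deficient roundabout model with
`k ≥ 1`, at most `6k` agents remain active after `⌊N/(2k)⌋` steps. -/
theorem roundabout_active_agents {N : ℕ} [NeZero N] (k : ℕ) (hk : 1 ≤ k)
    (R : Roundabout N) (hdef : R.KDeficient k) :
    (R.active (N / (2 * k))).ncard ≤ 6 * k := by
  classical
  set T := N / (2 * k) with hT
  by_cases hN : N ≤ 6 * k
  · calc (R.active T).ncard ≤ (Set.univ : Set (Fin N)).ncard :=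
          Set.ncard_le_ncard (Set.subset_univ _) Set.finite_univ
      _ = N := by simp [Set.ncard_univ]
      _ ≤ 6 * k := hN
  push_neg at hN
  have hk2 : 0 < 2 * k := by omega
  have hT1 : 1 ≤ T := (Nat.one_le_div_iff hk2).mpr (by omega)
  have hT2 : 2 * k * T ≤ N := by rw [hT, mul_comm]; exact Nat.div_mul_le_self N (2 * k)
  have hT3 : N < (T + 1) * (2 * k) := (Nat.div_lt_iff_lt_mul hk2).mp (Nat.lt_succ_self T)
  have hTN : T < N := by
    have h12 : T ≤ N / 2 := Nat.div_le_div_left (by omega) (by omega)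
    have h13 : N / 2 < N := Nat.div_lt_self (by omega) (by omega)
    omega
  obtain ⟨u, hu⟩ : ∃ u, T = u + 1 := ⟨T - 1, by omega⟩
  set S : Finset (Fin N) := (R.active T).toFinset with hS
  have hcard : (R.active T).ncard = S.card := Set.ncard_eq_toFinset_card' _
  have hSmem : ∀ {w : Fin N}, w ∈ S → w ∈ R.active T := fun h => by
    rwa [hS, Set.mem_toFinset] at h
  set D : Fin N → Set (Fin N) := fun w => cInt w (R.state w T) with hD
  -- (1) per-agent lower bound on interval size
  have h1 : ∀ w ∈ S, T + 1 ≤ (D w).ncard + blk R w T := by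
    intro w _
    have hb := blk_le R w T
    have : (D w).ncard = (T - blk R w T) + 1 := by
      rw [hD]; simp only
      rw [cInt_ncard, state_sub_val R w T hTN]
    omega
  -- (2) every point is covered by at most two active intervals
  have h2 : ∀ p : Fin N, (S.filter (fun w => p ∈ D w)).card ≤ 2 := by
    intro p
    by_contra hgt
    push_neg at hgt
    set F := S.filter (fun w => p ∈ D w) with hF
    have hFne : F.Nonempty := Finset.card_pos.mp (by omega)
    obtain ⟨x, hxF, hxmax⟩ := Finset.exists_max_image F (fun w => (p - w).val) hFne
    obtain ⟨y, hyF, hymax⟩ := Finset.exists_max_image F (fun w => (R.state w T - p).val) hFne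
    obtain ⟨z, hzF, hz⟩ : ∃ z ∈ F, z ∉ ({x, y} : Finset (Fin N)) := by
      by_contra hcon
      push_neg at hcon
      have hsub : F ⊆ {x, y} := hcon
      have hle := Finset.card_le_card hsub
      have : ({x, y} : Finset (Fin N)).card ≤ 2 :=
        le_trans (Finset.card_insert_le x {y}) (by simp)
      omega
    simp only [Finset.mem_insert, Finset.mem_singleton, not_or] at hz
    obtain ⟨hzx, hzy⟩ := hz
    have hzS : z ∈ S := (Finset.mem_filter.mp hzF).1
    have hpz : p ∈ D z := (Finset.mem_filter.mp hzF).2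
    have hxS : x ∈ S := (Finset.mem_filter.mp hxF).1
    have hpx : p ∈ D x := (Finset.mem_filter.mp hxF).2
    have hyS : y ∈ S := (Finset.mem_filter.mp hyF).1
    have hpy : p ∈ D y := (Finset.mem_filter.mp hyF).2
    have hsplit : D z ⊆ cInt z p ∪ cInt p (R.state z T) := cInt_split hpz
    have hzx' : cInt z p ⊆ cInt x p := cInt_mono_left (hxmax z hzF)
    have hxp : cInt x p ⊆ D x := cInt_subset_of_mem hpx
    have hzy' : cInt p (R.state z T) ⊆ cInt p (R.state y T) := cInt_mono_right (hymax z hzF)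
    have hyp : cInt p (R.state y T) ⊆ D y := cInt_trans hpy
    have hDx : D x ⊆ ⋃ w ∈ R.active T \ {z}, cInt w (R.state w T) :=
      subset_active_biUnion R T (hSmem hxS) (Ne.symm hzx)
    have hDy : D y ⊆ ⋃ w ∈ R.active T \ {z}, cInt w (R.state w T) :=
      subset_active_biUnion R T (hSmem hyS) (Ne.symm hzy)
    have hzact : z ∈ R.active (u + 1) := hu ▸ hSmem hzS
    refine R.active_nonredundant u z hzact ?_
    rw [← hu]
    intro q hq
    rcases hsplit hq with hcase | hcase
    · exact hDx (hxp (hzx' hcase))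
    · exact hDy (hyp (hzy' hcase))
  -- sum of interval sizes is at most 2N
  have hsum2 : ∑ w ∈ S, (D w).ncard ≤ 2 * N := by
    have hDcard : ∀ w : Fin N, (D w).ncard = (Finset.univ.filter (fun p => p ∈ D w)).card := by
      intro w
      have hco : D w = ↑(Finset.univ.filter (fun p => p ∈ D w)) := by ext q; simp
      have h' := Set.ncard_coe_finset (Finset.univ.filter (fun p => p ∈ D w))
      rw [← hco] at h'
      exact h' 
    calc ∑ w ∈ S, (D w).ncard
        = ∑ w ∈ S, ∑ p ∈ Finset.univ, (if p ∈ D w then 1 else 0) := by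
          refine Finset.sum_congr rfl fun w _ => ?_
          rw [hDcard w, Finset.card_filter]
      _ = ∑ p ∈ Finset.univ, ∑ w ∈ S, (if p ∈ D w then 1 else 0) := Finset.sum_comm
      _ = ∑ p ∈ Finset.univ, (S.filter (fun w => p ∈ D w)).card := by
          refine Finset.sum_congr rfl fun p _ => (Finset.card_filter _ _).symm
      _ ≤ ∑ _p ∈ (Finset.univ : Finset (Fin N)), 2 := Finset.sum_le_sum fun p _ => h2 p
      _ = 2 * N := by simp [mul_comm]
  -- sum of blocked counts is at most 2kT
  have h3 : ∑ w ∈ S, blk R w T ≤ T * (2 * k) := by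
    have hstep : ∀ τ ∈ Finset.range T,
        (S.filter (fun w => R.state w τ ∉ R.avail (τ + 1))).card ≤ 2 * k := by
      intro τ hτ
      rw [Finset.mem_range] at hτ
      have hcompl : ((R.avail (τ + 1))ᶜ : Set (Fin N)).ncard ≤ 2 * k :=
        hdef (τ + 1) (by omega) (by omega)
      rw [Set.ncard_eq_toFinset_card'] at hcompl
      refine le_trans (Finset.card_le_card_of_injOn (fun w => R.state w τ) ?_ ?_) hcompl
      · intro w hw
        rw [Finset.mem_coe, Set.mem_toFinset]
        exact (Finset.mem_filter.mp (Finset.mem_coe.mp hw)).2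
      · intro w1 hw1 w2 hw2 heq
        have heq' : R.state w1 τ = R.state w2 τ := heq
        rw [Finset.mem_coe] at hw1 hw2
        have ha1 : w1 ∈ R.active τ := active_le R (by omega) (hSmem (Finset.mem_filter.mp hw1).1)
        have ha2 : w2 ∈ R.active τ := active_le R (by omega) (hSmem (Finset.mem_filter.mp hw2).1)
        by_contra hne
        rcases Nat.eq_zero_or_pos τ with rfl | hpos
        · rw [R.state_zero, R.state_zero] at heq'
          exact hne heq'
        · obtain ⟨v, rfl⟩ : ∃ v, τ = v + 1 := ⟨τ - 1, by omega⟩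
          exact distinct_states R v ha1 ha2 hne heq' 
    calc ∑ w ∈ S, blk R w T
        = ∑ w ∈ S, ∑ τ ∈ Finset.range T, (if R.state w τ ∉ R.avail (τ + 1) then 1 else 0) := by
          refine Finset.sum_congr rfl fun w _ => ?_
          unfold blk
          rw [Finset.card_filter]
      _ = ∑ τ ∈ Finset.range T, ∑ w ∈ S, (if R.state w τ ∉ R.avail (τ + 1) then 1 else 0) :=
          Finset.sum_comm
      _ = ∑ τ ∈ Finset.range T, (S.filter (fun w => R.state w τ ∉ R.avail (τ + 1))).card := by
          refine Finset.sum_congr rfl fun τ _ => (Finset.card_filter _ _).symm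
      _ ≤ ∑ _τ ∈ Finset.range T, 2 * k := Finset.sum_le_sum hstep
      _ = T * (2 * k) := by simp [mul_comm]
  -- combine
  have hmain : S.card * (T + 1) ≤ 2 * N + T * (2 * k) := by
    calc S.card * (T + 1) = ∑ _w ∈ S, (T + 1) := by rw [Finset.sum_const, smul_eq_mul]
      _ ≤ ∑ w ∈ S, ((D w).ncard + blk R w T) := Finset.sum_le_sum h1
      _ = ∑ w ∈ S, (D w).ncard + ∑ w ∈ S, blk R w T := Finset.sum_add_distrib
      _ ≤ 2 * N + T * (2 * k) := add_le_add hsum2 h3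
  rw [hcard]
  by_contra hcon
  push_neg at hcon
  have h6 : (6 * k + 1) * (T + 1) ≤ S.card * (T + 1) :=
    Nat.mul_le_mul_right _ (by omega)
  have h7 : (6 * k + 1) * (T + 1) ≤ 2 * N + T * (2 * k) := le_trans h6 hmain
  nlinarith [h7, hT3, hT1, hT2, hk]
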